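/- Let f : ℝⁿ → ℝ be twice continuously differentiable in a neighborhood of x̄ with ∇f(x̄) = 0 and ∇²f(x̄) nonsingular, and suppose ∇²f(x̄) is positive definite or indefinite. Then the quantity liminf over x → x̄ with f(x) → f(x̄) and f(x) > f(x̄) of ‖∇f(x)‖ / (2√(f(x) − f(x̄))) equals √(λ_min / 2), where λ_min is the smallest positive eigenvalue of ∇²f(x̄). In particular, f satisfies the Kurdyka–Łojasiewicz inequality ‖∇f(x)‖ ≥ 2μ√(max{f(x)−f(x̄),0}) near x̄ for every μ < √(λ_min/2). -/

import Mathlib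

open Filter Topology
open RealInnerProductSpace

noncomputable section

abbrev En (n : ℕ) := EuclideanSpace ℝ (Fin n)





lemma spectral_bounds {n : ℕ} (H : Matrix (Fin n) (Fin n) ℝ) (hsymm : H.IsSymm)
    (hdet : H.det ≠ 0) (hne : Nonempty (Fin n)) (lammin : ℝ) (hlam0 : 0 ≤ lammin)
    (hmin : ∀ μ : ℝ, 0 < μ → (∃ v : En n, v ≠ 0 ∧
        (Matrix.toEuclideanCLM (𝕜 := ℝ) H) v = μ • v) → lammin ≤ μ) :
    ∃ c : ℝ, 0 < c ∧
      (∀ u : En n, c * ‖u‖ ≤ ‖(Matrix.toEuclideanCLM (𝕜 := ℝ) H) u‖) ∧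
      (∀ u : En n, lammin * (inner ℝ ((Matrix.toEuclideanCLM (𝕜 := ℝ) H) u) u : ℝ)
          ≤ ‖(Matrix.toEuclideanCLM (𝕜 := ℝ) H) u‖ ^ 2) := by
  set A : En n →L[ℝ] En n := Matrix.toEuclideanCLM (𝕜 := ℝ) H with hA
  have hAapp : ∀ u : En n, A u = Matrix.toEuclideanLin H u := by
    intro u
    rw [hA, ← Matrix.coe_toEuclideanCLM_eq_toEuclideanLin]
    rfl
  have hherm : H.IsHermitian := by
    rwa [Matrix.IsHermitian, Matrix.conjTranspose_eq_transpose_of_trivial]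
  have hT : (Matrix.toEuclideanLin H).IsSymmetric :=
    Matrix.isHermitian_iff_isSymmetric.1 hherm
  have hn : Module.finrank ℝ (En n) = n := finrank_euclideanSpace_fin
  set b := hT.eigenvectorBasis hn with hb
  set lam := hT.eigenvalues hn with hlam
  -- injectivity of A
  have hinj : Function.Injective A := by
    have hu : IsUnit H := (Matrix.isUnit_iff_isUnit_det H).2 (isUnit_iff_ne_zero.2 hdet)
    obtain ⟨B, hB⟩ := hu.map (Matrix.toEuclideanCLM (𝕜 := ℝ))
    intro x y hxy
    have h1 : ((B⁻¹ : (En n →L[ℝ] En n)ˣ) : En n →L[ℝ] En n) (A x)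
        = ((B⁻¹ : (En n →L[ℝ] En n)ˣ) : En n →L[ℝ] En n) (A y) := by rw [hxy]
    have h2 : ∀ z : En n, ((B⁻¹ : (En n →L[ℝ] En n)ˣ) : En n →L[ℝ] En n) (A z) = z := by
      intro z
      have : ((B⁻¹ : (En n →L[ℝ] En n)ˣ) : En n →L[ℝ] En n) * A = 1 := by
        rw [hA, ← hB]; exact B.inv_mul
      calc ((B⁻¹ : (En n →L[ℝ] En n)ˣ) : En n →L[ℝ] En n) (A z)
          = (((B⁻¹ : (En n →L[ℝ] En n)ˣ) : En n →L[ℝ] En n) * A) z := rfl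
        _ = z := by rw [this]; rfl
    rw [h2 x, h2 y] at h1; exact h1
  have happly : ∀ i, A (b i) = lam i • b i := by
    intro i
    rw [hAapp]
    exact_mod_cast hT.apply_eigenvectorBasis hn i
  have hbne : ∀ i, b i ≠ 0 := fun i => b.orthonormal.ne_zero i
  have hlamne : ∀ i, lam i ≠ 0 := by
    intro i h0
    apply hbne i
    have : A (b i) = A 0 := by rw [happly i, h0, zero_smul, map_zero]
    exact hinj this
  have hlmin : ∀ i, 0 < lam i → lammin ≤ lam i := fun i h =>
    hmin _ h ⟨b i, hbne i, happly i⟩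
  -- coordinates
  have hrepA : ∀ (u : En n) (i : Fin n), b.repr (A u) i = lam i * b.repr u i := by
    intro u i
    rw [hAapp]
    exact hT.eigenvectorBasis_apply_self_apply hn u i
  have hnormsq : ∀ u : En n, ‖u‖ ^ 2 = ∑ i, (b.repr u i) ^ 2 := by
    intro u
    rw [← b.repr.norm_map u, EuclideanSpace.norm_eq, Real.sq_sqrt (by positivity)]
    simp [Real.norm_eq_abs, sq_abs]
  have hinner : ∀ u w : En n, (inner ℝ u w : ℝ) = ∑ i, b.repr u i * b.repr w i := by
    intro u w
    have h1 : (inner ℝ u w : ℝ) = (inner ℝ (b.repr u) (b.repr w) : ℝ) :=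
      (b.repr.inner_map_map u w).symm
    rw [h1]
    simp only [PiLp.inner_apply, RCLike.inner_apply, starRingEnd_apply, star_trivial]
    exact Finset.sum_congr rfl (fun i _ => mul_comm _ _)
  -- the constant c
  set c : ℝ := Finset.univ.inf' (Finset.univ_nonempty) (fun i => |lam i|) with hc
  have hcpos : 0 < c := by
    rw [hc, Finset.lt_inf'_iff]
    exact fun i _ => abs_pos.2 (hlamne i)
  have hcle : ∀ i, c ≤ |lam i| := fun i =>
    Finset.inf'_le _ (Finset.mem_univ i)
  refine ⟨c, hcpos, ?_, ?_⟩
  · intro u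
    have h1 : (c * ‖u‖) ^ 2 ≤ ‖A u‖ ^ 2 := by
      rw [mul_pow, hnormsq u, hnormsq (A u), Finset.mul_sum]
      apply Finset.sum_le_sum
      intro i _
      rw [hrepA u i, mul_pow]
      have : c ^ 2 ≤ lam i ^ 2 := by
        rw [← sq_abs (lam i)]
        exact pow_le_pow_left₀ hcpos.le (hcle i) 2
      nlinarith [sq_nonneg (b.repr u i)]
    have h2 : 0 ≤ c * ‖u‖ := by positivity
    nlinarith [norm_nonneg (A u)]
  · intro u
    rw [hinner (A u) u, hnormsq (A u), Finset.mul_sum]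
    apply Finset.sum_le_sum
    intro i _
    rw [hrepA u i]
    rcases le_or_gt (lam i) 0 with h | h
    · have h1 : lam i * b.repr u i * b.repr u i ≤ 0 := by
        nlinarith [sq_nonneg (b.repr u i)]
      have h2 : lammin * (lam i * b.repr u i * b.repr u i) ≤ 0 :=
        mul_nonpos_of_nonneg_of_nonpos hlam0 h1
      nlinarith [sq_nonneg (lam i * b.repr u i)]
    · have := hlmin i h
      nlinarith [sq_nonneg (b.repr u i)]




lemma taylor_bound {n : ℕ} (f : En n → ℝ) (g : En n → En n) (xb : En n)
    (U : Set (En n)) (hU : U ∈ nhds xb)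
    (hgrad : ∀ x ∈ U, HasGradientAt f (g x) x) (hg0 : g xb = 0)
    (A : En n →L[ℝ] En n) (hhess : HasFDerivAt g A xb) {ε : ℝ} (hε : 0 < ε) :
    ∀ᶠ x in nhds xb, ‖g x - A (x - xb)‖ ≤ ε * ‖x - xb‖ ∧
      |f x - f xb - 1 / 2 * ⟪A (x - xb), x - xb⟫| ≤ ε * ‖x - xb‖ ^ 2 := by
  have hglin : ∀ᶠ x in nhds xb, ‖g x - A (x - xb)‖ ≤ ε * ‖x - xb‖ := by
    have h := hhess.isLittleO.def hε
    filter_upwards [h] with x hx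
    simpa [hg0] using hx
  obtain ⟨S, hSmem, hSsub⟩ := eventually_iff_exists_mem.1 hglin
  obtain ⟨δ, hδpos, hδsub⟩ := Metric.mem_nhds_iff.1 (inter_mem hSmem hU)
  have hball : Metric.ball xb δ ∈ nhds xb := Metric.ball_mem_nhds xb hδpos
  filter_upwards [hball, hglin] with x hx hgx
  refine ⟨hgx, ?_⟩
  set v : En n := x - xb with hv
  have hvnorm : ‖v‖ < δ := by
    rw [hv]
    simpa [dist_eq_norm] using hx
  have hmem : ∀ t : ℝ, t ∈ Set.Icc (0:ℝ) 1 → xb + t • v ∈ Metric.ball xb δ := by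
    intro t ht
    have : ‖t • v‖ ≤ ‖v‖ := by
      rw [norm_smul, Real.norm_eq_abs]
      have : |t| ≤ 1 := by rw [abs_le]; constructor <;> linarith [ht.1, ht.2]
      nlinarith [norm_nonneg v]
    simp only [Metric.mem_ball, dist_eq_norm, add_sub_cancel_left]
    linarith
  set Q : ℝ := ⟪A v, v⟫ with hQ
  set ψ : ℝ → ℝ := fun t => f (xb + t • v) - t ^ 2 / 2 * Q with hψ
  set ψ' : ℝ → ℝ := fun t => ⟪g (xb + t • v), v⟫ - t * Q with hψ'
  have hder : ∀ t ∈ Set.Icc (0:ℝ) 1, HasDerivAt ψ (ψ' t) t := by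
    intro t ht
    have hyU : xb + t • v ∈ U := (hδsub (hmem t ht)).2
    have hline : HasDerivAt (fun s : ℝ => xb + s • v) v t := by
      simpa using ((hasDerivAt_id t).smul_const v).const_add xb
    have hcomp : HasDerivAt (fun s : ℝ => f (xb + s • v))
        ((InnerProductSpace.toDual ℝ (En n) (g (xb + t • v))) v) t :=
      (hgrad _ hyU).hasFDerivAt.comp_hasDerivAt t hline
    rw [InnerProductSpace.toDual_apply_apply] at hcomp
    have hq : HasDerivAt (fun s : ℝ => s ^ 2 / 2 * Q) (t * Q) t := by
      have := ((hasDerivAt_pow 2 t).div_const 2).mul_const Q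
      exact this.congr_deriv (by norm_num)
    exact hcomp.sub hq
  have hbound : ∀ t ∈ Set.Ico (0:ℝ) 1, ‖ψ' t‖ ≤ ε * ‖v‖ ^ 2 := by
    intro t ht
    have htIcc : t ∈ Set.Icc (0:ℝ) 1 := ⟨ht.1, ht.2.le⟩
    set y : En n := xb + t • v with hy
    have hyS : y ∈ S := (hδsub (hmem t htIcc)).1
    have hgyb : ‖g y - A (y - xb)‖ ≤ ε * ‖y - xb‖ := hSsub y hyS
    have hyxb : y - xb = t • v := by rw [hy]; abel
    have heq : ψ' t = ⟪g y - A (y - xb), v⟫ := by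
      rw [inner_sub_left, hyxb, map_smul, real_inner_smul_left, hψ', hQ]
    rw [Real.norm_eq_abs, heq]
    calc |⟪g y - A (y - xb), v⟫| ≤ ‖g y - A (y - xb)‖ * ‖v‖ := abs_real_inner_le_norm _ _
      _ ≤ (ε * ‖y - xb‖) * ‖v‖ := by
          apply mul_le_mul_of_nonneg_right hgyb (norm_nonneg v)
      _ ≤ ε * ‖v‖ ^ 2 := by
          rw [hyxb, norm_smul, Real.norm_eq_abs]
          have ht1 : |t| ≤ 1 := by rw [abs_le]; constructor <;> linarith [ht.1, ht.2]
          nlinarith [mul_nonneg (mul_nonneg hε.le (sub_nonneg.2 ht1)) (sq_nonneg (‖v‖))]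
  have hmvt : ‖ψ 1 - ψ 0‖ ≤ ε * ‖v‖ ^ 2 :=
    norm_image_sub_le_of_norm_deriv_le_segment_01'
      (fun t ht => (hder t ht).hasDerivWithinAt) hbound
  have hψ1 : ψ 1 = f x - 1 / 2 * Q := by
    have hx1 : xb + (1:ℝ) • v = x := by rw [hv]; simp
    show f (xb + (1:ℝ) • v) - (1:ℝ) ^ 2 / 2 * Q = f x - 1 / 2 * Q
    rw [hx1]; norm_num
  have hψ0 : ψ 0 = f xb := by
    rw [hψ]; simp
  rw [hψ1, hψ0, Real.norm_eq_abs] at hmvt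
  have : f x - 1 / 2 * Q - f xb = f x - f xb - 1 / 2 * ⟪A v, v⟫ := by rw [hQ]; ring
  rwa [this] at hmvt



lemma tendsto_of_eventually_abs_sub_le {α : Type*} {l : Filter α} {h : α → ℝ} {L : ℝ}
    (H : ∀ ε : ℝ, 0 < ε → ∀ᶠ t in l, |h t - L| ≤ ε) : Tendsto h l (nhds L) := by
  rw [Metric.tendsto_nhds]
  intro ε hε
  filter_upwards [H (ε / 2) (by linarith)] with t ht
  rw [Real.dist_eq]
  linarith

lemma sqrt_half_arith {lam : ℝ} (hlam : 0 < lam) :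
    1 / (2 * Real.sqrt (1 / (2 * lam))) = Real.sqrt (lam / 2) ∧
    ∀ w : ℝ, 0 < w → lam * w / (2 * Real.sqrt (lam * w ^ 2 / 2)) = Real.sqrt (lam / 2) := by
  set s := Real.sqrt (lam / 2) with hsdef
  have hs : 0 < s := Real.sqrt_pos.2 (by positivity)
  have hs2 : s ^ 2 = lam / 2 := Real.sq_sqrt (by positivity)
  constructor
  · have h1 : Real.sqrt (1 / (2 * lam)) = s / lam := by
      rw [show (1 / (2 * lam)) = (s / lam) ^ 2 by rw [div_pow, hs2]; field_simp]
      exact Real.sqrt_sq (by positivity)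
    rw [h1, div_eq_iff (by positivity)]
    field_simp
    nlinarith [hs2]
  · intro w hw
    have h2 : Real.sqrt (lam * w ^ 2 / 2) = w * s := by
      rw [show lam * w ^ 2 / 2 = (w * s) ^ 2 by rw [mul_pow, hs2]; ring]
      exact Real.sqrt_sq (by positivity)
    rw [h2, div_eq_iff (by positivity)]
    nlinarith [hs2]

set_option maxHeartbeats 1000000 in
/-- for a `C²` function with `∇f(xb) = 0` and nonsingular Hessian
`H` that is positive definite or indefinite, the KŁ modulus with exponent `1/2`,
i.e. the liminf of `‖∇f(x)‖ / (2√(f(x) − f(xb)))` over `x → xb` with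
`f(x) → f(xb)` and `f(x) > f(xb)`, equals `√(λ_min/2)` where `λ_min` is the
smallest positive eigenvalue of `H`; in particular the KŁ inequality with
exponent `1/2` holds for every modulus `μ < √(λ_min/2)`. -/
theorem statement_13 {n : ℕ} (f : En n → ℝ) (g : En n → En n) (xb : En n)
    (U : Set (En n)) (hU : U ∈ nhds xb) (hf : ContDiffOn ℝ 2 f U)
    (hgrad : ∀ x ∈ U, HasGradientAt f (g x) x) (hg0 : g xb = 0)
    (H : Matrix (Fin n) (Fin n) ℝ) (hsymm : H.IsSymm)
    (hhess : HasFDerivAt g (Matrix.toEuclideanCLM (𝕜 := ℝ) H : En n →L[ℝ] En n) xb)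
    (hdet : H.det ≠ 0)
    (hposind : ∃ v : En n, 0 < (inner ℝ ((Matrix.toEuclideanCLM (𝕜 := ℝ) H) v) v : ℝ))
    (lammin : ℝ) (hlam0 : 0 < lammin)
    (heig : ∃ v : En n, v ≠ 0 ∧ (Matrix.toEuclideanCLM (𝕜 := ℝ) H) v = lammin • v)
    (hmin : ∀ μ : ℝ, 0 < μ → (∃ v : En n, v ≠ 0 ∧
        (Matrix.toEuclideanCLM (𝕜 := ℝ) H) v = μ • v) → lammin ≤ μ) :
    Filter.liminf (fun x : En n => ‖g x‖ / (2 * Real.sqrt (f x - f xb)))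
        ((nhds xb ⊓ Filter.comap f (nhds (f xb))) ⊓
          Filter.principal {x : En n | f xb < f x}) = Real.sqrt (lammin / 2) ∧
      ∀ μ : ℝ, 0 < μ → μ < Real.sqrt (lammin / 2) →
        ∃ ε : ℝ, 0 < ε ∧ ∃ ν : ℝ, 0 < ν ∧
          ∀ x : En n, ‖x - xb‖ ≤ ε → f x < f xb + ν →
            2 * μ * Real.sqrt (max (f x - f xb) 0) ≤ ‖g x‖ := by
  classical
  set A : En n →L[ℝ] En n := (Matrix.toEuclideanCLM (𝕜 := ℝ) H : En n →L[ℝ] En n) with hA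
  obtain ⟨v, hvne, hveig⟩ := heig
  have hnon : Nonempty (Fin n) := by
    rcases Nat.eq_zero_or_pos n with h0 | hpos
    · exfalso
      apply hvne
      ext i
      exact absurd i.2 (by omega)
    · exact ⟨⟨0, hpos⟩⟩
  obtain ⟨c, hcpos, hclow, hkey⟩ := spectral_bounds H hsymm hdet hnon lammin hlam0.le hmin
  set L : ℝ := Real.sqrt (lammin / 2) with hL
  have hLpos : 0 < L := Real.sqrt_pos.2 (by positivity)
  obtain ⟨harith1, harith2⟩ := sqrt_half_arith hlam0
  set F := (nhds xb ⊓ Filter.comap f (nhds (f xb))) ⊓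
      Filter.principal {x : En n | f xb < f x} with hF
  set r : En n → ℝ := fun x => ‖g x‖ / (2 * Real.sqrt (f x - f xb)) with hr
  have hr0 : ∀ x, 0 ≤ r x := fun x => div_nonneg (norm_nonneg _) (by positivity)
  have hFle : F ≤ nhds xb := le_trans inf_le_left inf_le_left
  have hFprin : ∀ᶠ x in F, f xb < f x := le_principal_iff.1 inf_le_right
  -- lower bound family
  set l0 : Filter ℝ := nhdsWithin (0:ℝ) (Set.Ioi 0) with hl0
  set ℓ : ℝ → ℝ := fun ε => (1 - ε / c) / (2 * Real.sqrt (1 / (2 * lammin) + ε / c ^ 2))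
    with hℓ
  have hLB : ∀ ε : ℝ, 0 < ε → ∀ᶠ x in F, ℓ ε ≤ r x := by
    intro ε hε
    have htay := (taylor_bound f g xb U hU hgrad hg0 A hhess hε).filter_mono hFle
    filter_upwards [htay, hFprin] with x hx hfx
    obtain ⟨hg1, hf1⟩ := hx
    rcases le_or_gt (ℓ ε) 0 with h0 | h0
    · exact h0.trans (hr0 x)
    set u : En n := x - xb with hu
    have hd : 0 < f x - f xb := by linarith
    have hune : u ≠ 0 := by
      intro h
      rw [hu, sub_eq_zero] at h
      rw [h] at hd
      linarith
    have hupos : 0 < ‖u‖ := norm_pos_iff.2 hune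
    have hAu : 0 < ‖A u‖ := lt_of_lt_of_le (by positivity) (hclow u)
    have hnum : (1 - ε / c) * ‖A u‖ ≤ ‖g x‖ := by
      have h1 : ‖A u‖ - ‖g x‖ ≤ ε * ‖u‖ := by
        calc ‖A u‖ - ‖g x‖ ≤ ‖A u - g x‖ := norm_sub_norm_le _ _
          _ = ‖g x - A u‖ := norm_sub_rev _ _
          _ ≤ ε * ‖u‖ := hg1
      have h2 : ε * ‖u‖ ≤ ε / c * ‖A u‖ := by
        rw [div_mul_eq_mul_div, le_div_iff₀ hcpos]
        nlinarith [hclow u]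
      have h3 : (1 - ε / c) * ‖A u‖ = ‖A u‖ - ε / c * ‖A u‖ := by ring
      linarith
    set K : ℝ := 1 / (2 * lammin) + ε / c ^ 2 with hK
    have hKpos : 0 < K := by positivity
    have hdle : f x - f xb ≤ K * ‖A u‖ ^ 2 := by
      have h3 : f x - f xb ≤ 1 / 2 * ⟪A u, u⟫ + ε * ‖u‖ ^ 2 := by
        have := (abs_le.1 hf1).2
        linarith
      have h4 : 1 / 2 * ⟪A u, u⟫ ≤ ‖A u‖ ^ 2 / (2 * lammin) := by
        rw [le_div_iff₀ (by positivity)]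
        nlinarith [hkey u]
      have h5 : ε * ‖u‖ ^ 2 ≤ ε / c ^ 2 * ‖A u‖ ^ 2 := by
        have hc2 : c ^ 2 * ‖u‖ ^ 2 ≤ ‖A u‖ ^ 2 := by
          nlinarith [hclow u, norm_nonneg u, norm_nonneg (A u),
            mul_nonneg hcpos.le (norm_nonneg u)]
        rw [div_mul_eq_mul_div, le_div_iff₀ (by positivity)]
        nlinarith
      calc f x - f xb ≤ 1 / 2 * ⟪A u, u⟫ + ε * ‖u‖ ^ 2 := h3
        _ ≤ ‖A u‖ ^ 2 / (2 * lammin) + ε / c ^ 2 * ‖A u‖ ^ 2 := add_le_add h4 h5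
        _ = K * ‖A u‖ ^ 2 := by rw [hK]; ring
    have hsd : Real.sqrt (f x - f xb) ≤ Real.sqrt K * ‖A u‖ := by
      have : Real.sqrt K * ‖A u‖ = Real.sqrt (K * ‖A u‖ ^ 2) := by
        rw [Real.sqrt_mul hKpos.le, Real.sqrt_sq (norm_nonneg _)]
      rw [this]
      exact Real.sqrt_le_sqrt hdle
    have h6 : ℓ ε = (1 - ε / c) * ‖A u‖ / (2 * (Real.sqrt K * ‖A u‖)) := by
      rw [show (2:ℝ) * (Real.sqrt K * ‖A u‖) = 2 * Real.sqrt K * ‖A u‖ by ring,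
        mul_div_mul_right _ _ (ne_of_gt hAu)]
    rw [h6, hr]
    exact div_le_div₀ (norm_nonneg (g x)) hnum (by positivity)
      (by nlinarith [hsd])
  -- ℓ tends to L
  have hℓtendsto : Tendsto ℓ l0 (nhds L) := by
    have h1 : Tendsto (fun ε : ℝ => 1 - ε / c) (nhds 0) (nhds 1) := by
      have hcont : Continuous (fun ε : ℝ => 1 - ε / c) :=
        continuous_const.sub (continuous_id.div_const c)
      have h0 := hcont.tendsto 0
      simp only [zero_div, sub_zero] at h0
      exact h0
    have h2 : Tendsto (fun ε : ℝ => 2 * Real.sqrt (1 / (2 * lammin) + ε / c ^ 2)) (nhds 0)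
        (nhds (2 * Real.sqrt (1 / (2 * lammin)))) := by
      have hc : Continuous (fun ε : ℝ => 2 * Real.sqrt (1 / (2 * lammin) + ε / c ^ 2)) :=
        continuous_const.mul ((continuous_const.add (continuous_id.div_const (c ^ 2))).sqrt)
      have := hc.tendsto 0
      simpa using this
    have hden0 : 2 * Real.sqrt (1 / (2 * lammin)) ≠ 0 := by positivity
    have h3 := h1.div h2 hden0
    rw [harith1] at h3
    exact h3.mono_left nhdsWithin_le_nhds
  -- the eigen-direction path
  have hw : 0 < ‖v‖ := norm_pos_iff.2 hvne
  set path : ℝ → En n := fun t => xb + t • v with hpath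
  have hpathc : Continuous path :=
    continuous_const.add (continuous_id.smul continuous_const)
  have hpath0 : Tendsto path l0 (nhds xb) := by
    have := hpathc.tendsto 0
    simp only [hpath, zero_smul, add_zero] at this
    exact this.mono_left nhdsWithin_le_nhds
  have hpathsub : ∀ t : ℝ, path t - xb = t • v := fun t => add_sub_cancel_left xb (t • v)
  set P : ℝ := lammin * ‖v‖ ^ 2 / 2 with hP
  have hPpos : 0 < P := by positivity
  have hQt : ∀ t : ℝ, (⟪A (t • v), t • v⟫ : ℝ) = t ^ 2 * (lammin * ‖v‖ ^ 2) := by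
    intro t
    rw [map_smul, hveig, smul_smul, real_inner_smul_left, real_inner_smul_right,
      real_inner_self_eq_norm_sq]
    ring
  have hfd : Tendsto (fun t => (f (path t) - f xb) / t ^ 2) l0 (nhds P) := by
    apply tendsto_of_eventually_abs_sub_le
    intro ε hε
    have hε0 : 0 < ε / ‖v‖ ^ 2 := by positivity
    have htay := hpath0.eventually (taylor_bound f g xb U hU hgrad hg0 A hhess hε0)
    filter_upwards [htay, self_mem_nhdsWithin] with t ht htpos
    obtain ⟨_, hf1⟩ := ht
    rw [hpathsub] at hf1
    have ht0 : (0:ℝ) < t := htpos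
    have hnv : ‖t • v‖ ^ 2 = t ^ 2 * ‖v‖ ^ 2 := by
      rw [norm_smul, Real.norm_eq_abs, mul_pow, sq_abs]
    rw [hQt t, hnv] at hf1
    have h7 : |f (path t) - f xb - t ^ 2 * P| ≤ ε * t ^ 2 := by
      have : ε / ‖v‖ ^ 2 * (t ^ 2 * ‖v‖ ^ 2) = ε * t ^ 2 := by
        field_simp
      rw [this] at hf1
      have heq : f (path t) - f xb - 1 / 2 * (t ^ 2 * (lammin * ‖v‖ ^ 2))
          = f (path t) - f xb - t ^ 2 * P := by rw [hP]; ring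
      rwa [heq] at hf1
    have ht2 : (0:ℝ) < t ^ 2 := by positivity
    have h8 : (f (path t) - f xb) / t ^ 2 - P = (f (path t) - f xb - t ^ 2 * P) / t ^ 2 := by
      field_simp
    rw [h8, abs_div, abs_of_pos ht2, div_le_iff₀ ht2]
    linarith [h7]
  have hgd : Tendsto (fun t => ‖g (path t)‖ / t) l0 (nhds (lammin * ‖v‖)) := by
    apply tendsto_of_eventually_abs_sub_le
    intro ε hε
    have hε0 : 0 < ε / ‖v‖ := by positivity
    have htay := hpath0.eventually (taylor_bound f g xb U hU hgrad hg0 A hhess hε0)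
    filter_upwards [htay, self_mem_nhdsWithin] with t ht htpos
    obtain ⟨hg1, _⟩ := ht
    rw [hpathsub] at hg1
    have ht0 : (0:ℝ) < t := htpos
    have hAtv : A (t • v) = t • (lammin • v) := by rw [map_smul, hveig]
    rw [hAtv] at hg1
    have hnorm1 : ‖t • (lammin • v)‖ = t * (lammin * ‖v‖) := by
      rw [norm_smul, norm_smul, Real.norm_eq_abs, Real.norm_eq_abs,
        abs_of_pos ht0, abs_of_pos hlam0]
    have hnorm2 : ‖t • v‖ = t * ‖v‖ := by
      rw [norm_smul, Real.norm_eq_abs, abs_of_pos ht0]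
    have h9 : |‖g (path t)‖ - t * (lammin * ‖v‖)| ≤ ε * t := by
      calc |‖g (path t)‖ - t * (lammin * ‖v‖)|
          = |‖g (path t)‖ - ‖t • (lammin • v)‖| := by rw [hnorm1]
        _ ≤ ‖g (path t) - t • (lammin • v)‖ := abs_norm_sub_norm_le _ _
        _ ≤ ε / ‖v‖ * ‖t • v‖ := hg1
        _ = ε * t := by rw [hnorm2]; field_simp
    have h10 : ‖g (path t)‖ / t - lammin * ‖v‖
        = (‖g (path t)‖ - t * (lammin * ‖v‖)) / t := by
      field_simp
    rw [h10, abs_div, abs_of_pos ht0, div_le_iff₀ ht0]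
    linarith [h9]
  have hpos : ∀ᶠ t in l0, f xb < f (path t) := by
    filter_upwards [hfd.eventually (eventually_gt_nhds hPpos), self_mem_nhdsWithin]
      with t ht htpos
    have ht0 : (0:ℝ) < t := htpos
    have ht2 : (0:ℝ) < t ^ 2 := by positivity
    rcases div_pos_iff.1 ht with ⟨hnum, _⟩ | ⟨_, hneg⟩
    · linarith
    · linarith
  have hfcont : ContinuousAt f xb := hf.continuousOn.continuousAt hU
  have hmaple : Filter.map path l0 ≤ F := by
    rw [hF]
    refine le_inf (le_inf hpath0 ?_) ?_
    · rw [Filter.map_le_iff_le_comap, Filter.comap_comap]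
      exact Filter.map_le_iff_le_comap.1 (hfcont.tendsto.comp hpath0)
    · rw [le_principal_iff, Filter.mem_map]
      exact hpos
  have hratio : Tendsto (fun t => r (path t)) l0 (nhds L) := by
    have hden : Tendsto (fun t => 2 * Real.sqrt ((f (path t) - f xb) / t ^ 2)) l0
        (nhds (2 * Real.sqrt P)) :=
      ((Real.continuous_sqrt.tendsto P).comp hfd).const_mul 2
    have hdnz : 2 * Real.sqrt P ≠ 0 := by positivity
    have hq := hgd.div hden hdnz
    have hval : lammin * ‖v‖ / (2 * Real.sqrt P) = L := by
      rw [hP]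
      exact harith2 ‖v‖ hw
    rw [hval] at hq
    apply hq.congr'
    filter_upwards [hpos, self_mem_nhdsWithin] with t htf htpos
    have ht0 : (0:ℝ) < t := htpos
    have hd : 0 < f (path t) - f xb := by linarith
    have hsq : Real.sqrt ((f (path t) - f xb) / t ^ 2)
        = Real.sqrt (f (path t) - f xb) / t := by
      rw [Real.sqrt_div hd.le, Real.sqrt_sq ht0.le]
    simp only [Pi.div_apply]
    rw [hsq, hr]
    have hsd : 0 < Real.sqrt (f (path t) - f xb) := Real.sqrt_pos.2 hd
    field_simp
  have hlne : l0.NeBot := by rw [hl0]; infer_instance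
  have hmapne : (Filter.map path l0).NeBot := Filter.map_neBot
  have hFne : F.NeBot := neBot_of_le hmaple
  have hbddF : F.IsBoundedUnder (· ≥ ·) r :=
    ⟨0, Filter.eventually_map.2 (Filter.Eventually.of_forall hr0)⟩
  have hfreq : ∃ᶠ x in F, r x ≤ L + 1 := by
    have hev : ∀ᶠ t in l0, r (path t) ≤ L + 1 :=
      hratio.eventually (eventually_le_nhds (lt_add_one L))
    have : ∃ᶠ x in Filter.map path l0, r x ≤ L + 1 :=
      (Filter.eventually_map.2 hev).frequently
    exact this.filter_mono hmaple
  have hcobF : F.IsCoboundedUnder (· ≥ ·) r :=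
    Filter.IsCoboundedUnder.of_frequently_le hfreq
  have hcobmap : (Filter.map path l0).IsCoboundedUnder (· ≥ ·) r := by
    apply Filter.IsCoboundedUnder.of_frequently_le (u := fun x => r x) (a := L + 1)
    exact (Filter.eventually_map.2
      (hratio.eventually (eventually_le_nhds (lt_add_one L)))).frequently
  constructor
  · apply le_antisymm
    · have h1 : Filter.liminf r F ≤ Filter.liminf r (Filter.map path l0) :=
        Filter.liminf_le_liminf_of_le hmaple hbddF hcobmap
      have h2 : Filter.liminf r (Filter.map path l0) = L :=
        (Filter.tendsto_map'_iff.2 hratio).liminf_eq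
      rw [h2] at h1
      exact h1
    · have hev : ∀ᶠ ε in l0, ℓ ε ≤ Filter.liminf r F := by
        filter_upwards [self_mem_nhdsWithin] with ε hε
        exact Filter.le_liminf_of_le hcobF (hLB ε hε)
      exact le_of_tendsto hℓtendsto hev
  · intro μ hμ0 hμL
    have hev : ∀ᶠ ε in l0, μ < ℓ ε := hℓtendsto.eventually (eventually_gt_nhds hμL)
    obtain ⟨ε₀, hμε₀, hε₀pos⟩ := (hev.and self_mem_nhdsWithin).exists
    have hε₀pos' : (0:ℝ) < ε₀ := hε₀pos
    obtain ⟨W, hWF, hWsub⟩ := Filter.eventually_iff_exists_mem.1 (hLB ε₀ hε₀pos')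
    rw [hF] at hWF
    obtain ⟨W₁, hW₁, W₂, hW₂, hWsub2⟩ := Filter.mem_inf_iff_superset.1 hWF
    obtain ⟨S, hSnhds, T, hTcomap, hW1sub⟩ := Filter.mem_inf_iff_superset.1 hW₁
    obtain ⟨V, hV, hVsub⟩ := Filter.mem_comap.1 hTcomap
    obtain ⟨ρ, hρpos, hρsub⟩ := Metric.mem_nhds_iff.1 hSnhds
    obtain ⟨ν, hνpos, hνsub⟩ := Metric.mem_nhds_iff.1 hV
    refine ⟨ρ / 2, by positivity, ν, hνpos, ?_⟩
    intro x hxball hxf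
    rcases le_or_gt (f x) (f xb) with hle | hgt
    · have : max (f x - f xb) 0 = 0 := max_eq_right (by linarith)
      rw [this, Real.sqrt_zero, mul_zero]
      exact norm_nonneg _
    · have hxW : x ∈ W := by
        apply hWsub2
        constructor
        · apply hW1sub
          constructor
          · apply hρsub
            rw [Metric.mem_ball, dist_eq_norm]
            linarith
          · apply hVsub
            apply Set.mem_preimage.2
            apply hνsub
            rw [Metric.mem_ball, Real.dist_eq, abs_lt]
            constructor <;> linarith
        · exact Filter.mem_principal.1 hW₂ hgt
      have hrx : ℓ ε₀ ≤ r x := hWsub x hxW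
      have hd : 0 < f x - f xb := by linarith
      have hmax : max (f x - f xb) 0 = f x - f xb := max_eq_left hd.le
      rw [hmax]
      have hsd : 0 < Real.sqrt (f x - f xb) := Real.sqrt_pos.2 hd
      have hμr : μ ≤ r x := le_trans hμε₀.le hrx
      rw [hr, le_div_iff₀ (by positivity)] at hμr
      calc 2 * μ * Real.sqrt (f x - f xb) = μ * (2 * Real.sqrt (f x - f xb)) := by ring
        _ ≤ ‖g x‖ := hμr
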